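/- For any σ₁, σ₂, σ₃ > 0 and 0 < k < 1/3, the coupled cubic system ςᵢ³ + ςᵢ² - k·(ς₁ + ς₂ + ς₃)·ςᵢ² = σᵢ, i = 1, 2, 3, has exactly one solution (ς₁, ς₂, ς₃) with all three components positive. -/

import Mathlib

private lemma root_exists (c σ : ℝ) (hσ : 0 < σ) : ∃ x : ℝ, 0 < x ∧ x^3 + c*x^2 = σ := by
  set b := |c| + σ + 1 with hb_def
  have hb : (0:ℝ) ≤ b := by positivity
  have hcont : ContinuousOn (fun x : ℝ => x^3 + c*x^2) (Set.Icc 0 b) := by fun_prop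
  have h1b : (1:ℝ) ≤ b := by have := abs_nonneg c; simp only [hb_def]; linarith
  have hσb : σ + 1 ≤ b + c := by have := neg_abs_le c; simp only [hb_def]; linarith
  have hmem : σ ∈ Set.Icc ((fun x:ℝ => x^3 + c*x^2) 0) ((fun x:ℝ => x^3 + c*x^2) b) := by
    constructor
    · simp; linarith
    · simp only
      nlinarith [sq_nonneg b, sq_nonneg (b-1)]
  obtain ⟨x, hx, hfx⟩ := intermediate_value_Icc hb hcont hmem
  refine ⟨x, ?_, hfx⟩
  rcases eq_or_lt_of_le hx.1 with h|h
  · exfalso; rw [← h] at hfx; simp at hfx; linarith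
  · exact h

private lemma key (x x' c c' σ : ℝ) (hx : 0 < x) (hx' : 0 < x') (hσ : 0 < σ)
    (h : x^3 + c*x^2 = σ) (h' : x'^3 + c'*x'^2 = σ) (hcc : c' ≤ c) :
    0 ≤ x' - x ∧ x' - x ≤ c - c' := by
  have hc' : 0 < x' + c' := by nlinarith [pow_pos hx' 2, pow_pos hx' 3]
  have hB : x^2 < x'^2 + x'*x + x^2 + c'*(x'+x) := by
    nlinarith [mul_pos (add_pos hx' hx) hc']
  have hid : (x' - x) * (x'^2 + x'*x + x^2 + c'*(x'+x)) = (c - c') * x^2 := by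
    linear_combination h' - h
  constructor
  · nlinarith [pow_pos hx 2, mul_nonneg (sub_nonneg.2 hcc) (sq_nonneg x)]
  · nlinarith [pow_pos hx 2, mul_nonneg (sub_nonneg.2 hcc) (sq_nonneg x)]

private lemma coefmono (k S T : ℝ) (hk : 0 < k) (h : S ≤ T) : 1 - k*T ≤ 1 - k*S := by
  nlinarith [mul_nonneg hk.le (sub_nonneg.2 h)]

private lemma cancel3 (k a b : ℝ) (hk' : k < 1/3) (hab : a ≤ b)
    (h3 : b - a ≤ 3*(k*b - k*a)) : b = a := by
  have : b ≤ a := by nlinarith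
  linarith

private noncomputable def rt (c σ : ℝ) : ℝ :=
  if h : 0 < σ then (root_exists c σ h).choose else 1

private lemma rt_pos (c σ : ℝ) (h : 0 < σ) : 0 < rt c σ := by
  rw [rt, dif_pos h]; exact (root_exists c σ h).choose_spec.1

private lemma rt_eq (c σ : ℝ) (h : 0 < σ) : (rt c σ)^3 + c*(rt c σ)^2 = σ := by
  rw [rt, dif_pos h]; exact (root_exists c σ h).choose_spec.2

private lemma rt_lip (σ c c' : ℝ) (hσ : 0 < σ) (hcc : c' ≤ c) :
    0 ≤ rt c' σ - rt c σ ∧ rt c' σ - rt c σ ≤ c - c' :=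
  key (rt c σ) (rt c' σ) c c' σ (rt_pos c σ hσ) (rt_pos c' σ hσ) hσ
    (rt_eq c σ hσ) (rt_eq c' σ hσ) hcc

private lemma uniq_aux (k σ₁ σ₂ σ₃ x y z t₁ t₂ t₃ : ℝ) (hk : 0 < k) (hk' : k < 1/3)
    (h1 : 0 < σ₁) (h2 : 0 < σ₂) (h3 : 0 < σ₃)
    (hx : 0 < x) (hy : 0 < y) (hz : 0 < z)
    (ht₁ : 0 < t₁) (ht₂ : 0 < t₂) (ht₃ : 0 < t₃)
    (hxe : x^3 + (1 - k*(x+y+z))*x^2 = σ₁)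
    (hye : y^3 + (1 - k*(x+y+z))*y^2 = σ₂)
    (hze : z^3 + (1 - k*(x+y+z))*z^2 = σ₃)
    (he₁ : t₁^3 + (1 - k*(t₁+t₂+t₃))*t₁^2 = σ₁)
    (he₂ : t₂^3 + (1 - k*(t₁+t₂+t₃))*t₂^2 = σ₂)
    (he₃ : t₃^3 + (1 - k*(t₁+t₂+t₃))*t₃^2 = σ₃) :
    t₁ = x ∧ t₂ = y ∧ t₃ = z := by
  set S := x + y + z with hS_def
  set T := t₁ + t₂ + t₃ with hT_def
  have hST : S = T := by
    rcases le_total S T with h|h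
    · have hcc := coefmono k S T hk h
      have k1 := key x t₁ (1 - k*S) (1 - k*T) σ₁ hx ht₁ h1 hxe he₁ hcc
      have k2 := key y t₂ (1 - k*S) (1 - k*T) σ₂ hy ht₂ h2 hye he₂ hcc
      have k3 := key z t₃ (1 - k*S) (1 - k*T) σ₃ hz ht₃ h3 hze he₃ hcc
      have hsum3 : T - S ≤ 3*(k*T - k*S) := by linarith [k1.2, k2.2, k3.2]
      exact (cancel3 k S T hk' h hsum3).symm
    · have hcc := coefmono k T S hk h
      have k1 := key t₁ x (1 - k*T) (1 - k*S) σ₁ ht₁ hx h1 he₁ hxe hcc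
      have k2 := key t₂ y (1 - k*T) (1 - k*S) σ₂ ht₂ hy h2 he₂ hye hcc
      have k3 := key t₃ z (1 - k*T) (1 - k*S) σ₃ ht₃ hz h3 he₃ hze hcc
      have hsum3 : S - T ≤ 3*(k*S - k*T) := by linarith [k1.2, k2.2, k3.2]
      exact cancel3 k T S hk' h hsum3
  have hkST : k*S = k*T := by rw [hST]
  have hcc : 1 - k*T ≤ 1 - k*S := by linarith
  have k1 := key x t₁ (1 - k*S) (1 - k*T) σ₁ hx ht₁ h1 hxe he₁ hcc
  have k2 := key y t₂ (1 - k*S) (1 - k*T) σ₂ hy ht₂ h2 hye he₂ hcc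
  have k3 := key z t₃ (1 - k*S) (1 - k*T) σ₃ hz ht₃ h3 hze he₃ hcc
  refine ⟨?_, ?_, ?_⟩
  · linarith [k1.1, k1.2]
  · linarith [k2.1, k2.2]
  · linarith [k3.1, k3.2]

set_option maxHeartbeats 1000000 in
theorem stmt_18 (k σ₁ σ₂ σ₃ : ℝ) (hk : 0 < k) (hk' : k < 1/3)
    (h1 : 0 < σ₁) (h2 : 0 < σ₂) (h3 : 0 < σ₃) :
    ∃! s : ℝ × ℝ × ℝ,
      (0 < s.1 ∧ 0 < s.2.1 ∧ 0 < s.2.2) ∧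
      s.1^3 + s.1^2 - k*(s.1 + s.2.1 + s.2.2)*s.1^2 = σ₁ ∧
      s.2.1^3 + s.2.1^2 - k*(s.1 + s.2.1 + s.2.2)*s.2.1^2 = σ₂ ∧
      s.2.2^3 + s.2.2^2 - k*(s.1 + s.2.1 + s.2.2)*s.2.2^2 = σ₃ := by
  set g : ℝ → ℝ := fun S => rt (1 - k*S) σ₁ + rt (1 - k*S) σ₂ + rt (1 - k*S) σ₃ with hg_def
  have mono : ∀ S T : ℝ, S ≤ T → 0 ≤ g T - g S ∧ g T - g S ≤ 3*k*(T - S) := by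
    intro S T hST
    have hcc := coefmono k S T hk hST
    have l1 := rt_lip σ₁ (1 - k*S) (1 - k*T) h1 hcc
    have l2 := rt_lip σ₂ (1 - k*S) (1 - k*T) h2 hcc
    have l3 := rt_lip σ₃ (1 - k*S) (1 - k*T) h3 hcc
    constructor
    · simp only [hg_def]; linarith [l1.1, l2.1, l3.1]
    · simp only [hg_def]; linarith [l1.2, l2.2, l3.2]
  have hcontg : Continuous g := by
    have hlw : LipschitzWith ⟨3*k, by positivity⟩ g := by
      apply LipschitzWith.of_dist_le_mul
      intro S T
      simp only [NNReal.coe_mk, Real.dist_eq]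
      rcases le_total S T with h|h
      · have hm := mono S T h
        rw [abs_of_nonpos (by linarith [hm.1]), abs_of_nonpos (by linarith)]
        change _ ≤ 3*k * _
        linarith [hm.2]
      · have hm := mono T S h
        rw [abs_of_nonneg (by linarith [hm.1]), abs_of_nonneg (by linarith)]
        change _ ≤ 3*k * _
        linarith [hm.2]
    exact hlw.continuous
  have hg0 : 0 < g 0 := by
    have := rt_pos (1 - k*0) σ₁ h1
    have := rt_pos (1 - k*0) σ₂ h2
    have := rt_pos (1 - k*0) σ₃ h3
    simp only [hg_def]; linarith
  set S₁ : ℝ := g 0 / (1 - 3*k) with hS₁_def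
  have h3k : 0 < 1 - 3*k := by linarith
  have hS₁pos : 0 < S₁ := div_pos hg0 h3k
  have hS₁ : g S₁ - S₁ ≤ 0 := by
    have hm := mono 0 S₁ hS₁pos.le
    have hb : g S₁ ≤ g 0 + 3*k*S₁ := by linarith [hm.2]
    have hGS : g 0 = (1 - 3*k) * S₁ := by
      rw [hS₁_def]; field_simp
    linarith [hb, hGS]
  have hcont2 : ContinuousOn (fun S => g S - S) (Set.Icc 0 S₁) :=
    (hcontg.sub continuous_id).continuousOn
  have hmem : (0:ℝ) ∈ Set.Icc ((fun S => g S - S) S₁) ((fun S => g S - S) 0) := by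
    constructor
    · exact hS₁
    · simp only; linarith
  obtain ⟨S, _, hfS⟩ := intermediate_value_Icc' hS₁pos.le hcont2 hmem
  have hfix : g S = S := by simp only at hfS; linarith [hfS]
  set x := rt (1 - k*S) σ₁ with hx_def
  set y := rt (1 - k*S) σ₂ with hy_def
  set z := rt (1 - k*S) σ₃ with hz_def
  have hsum : x + y + z = S := hfix
  have hxpos : 0 < x := rt_pos (1 - k*S) σ₁ h1
  have hypos : 0 < y := rt_pos (1 - k*S) σ₂ h2
  have hzpos : 0 < z := rt_pos (1 - k*S) σ₃ h3
  have hxe : x^3 + (1 - k*S)*x^2 = σ₁ := rt_eq (1 - k*S) σ₁ h1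
  have hye : y^3 + (1 - k*S)*y^2 = σ₂ := rt_eq (1 - k*S) σ₂ h2
  have hze : z^3 + (1 - k*S)*z^2 = σ₃ := rt_eq (1 - k*S) σ₃ h3
  have hxe' : x^3 + (1 - k*(x+y+z))*x^2 = σ₁ := by rw [hsum]; exact hxe
  have hye' : y^3 + (1 - k*(x+y+z))*y^2 = σ₂ := by rw [hsum]; exact hye
  have hze' : z^3 + (1 - k*(x+y+z))*z^2 = σ₃ := by rw [hsum]; exact hze
  refine ⟨(x, y, z), ⟨⟨hxpos, hypos, hzpos⟩, ?_, ?_, ?_⟩, ?_⟩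
  · simp only; linear_combination hxe'
  · simp only; linear_combination hye'
  · simp only; linear_combination hze'
  · rintro ⟨t₁, t₂, t₃⟩ ⟨⟨ht₁, ht₂, ht₃⟩, he₁, he₂, he₃⟩
    simp only at he₁ he₂ he₃ ht₁ ht₂ ht₃
    have he₁' : t₁^3 + (1 - k*(t₁+t₂+t₃))*t₁^2 = σ₁ := by linear_combination he₁
    have he₂' : t₂^3 + (1 - k*(t₁+t₂+t₃))*t₂^2 = σ₂ := by linear_combination he₂
    have he₃' : t₃^3 + (1 - k*(t₁+t₂+t₃))*t₃^2 = σ₃ := by linear_combination he₃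
    obtain ⟨e1, e2, e3⟩ := uniq_aux k σ₁ σ₂ σ₃ x y z t₁ t₂ t₃ hk hk' h1 h2 h3
      hxpos hypos hzpos ht₁ ht₂ ht₃ hxe' hye' hze' he₁' he₂' he₃'
    simp only [Prod.mk.injEq]
    exact ⟨e1, e2, e3⟩
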